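/- arXiv:0806.2901 — 4 statements merged into one kernel-verified Lean document; each statement's English description precedes it below -/
import Mathlib

section
/- Suppose a trend-free order π : {1,…,k} → {1,…,v} exists, i.e., h_i = ∑_{p : π(p)=i} φ(p) = 0 for all i. Then for each i, n_i·(k+1) is even, where n_i is the replication of treatment i. -/
open Finset

/-- The linear orthonormal polynomial on `{1,…,k}`. -/
noncomputable def phi (k p : ℕ) : ℝ :=
  Real.sqrt (3 / ((k : ℝ) * ((k : ℝ) ^ 2 - 1))) * (2 * (p : ℝ) - (k : ℝ) - 1)

/-- Replication `n_i` of treatment `i` in the order `π` on positions `{1,…,k}`. -/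
def reps (v k : ℕ) (π : ℕ → Fin v) (i : Fin v) : ℕ :=
  ((Icc 1 k).filter (fun p => π p = i)).card

/-- The set of coincidence pairs `P(π) = {(p,q) : p < q, π(p) = π(q)}`. -/
def coincPairs (v k : ℕ) (π : ℕ → Fin v) : Finset (ℕ × ℕ) :=
  ((Icc 1 k ×ˢ Icc 1 k).filter (fun pq => pq.1 < pq.2 ∧ π pq.1 = π pq.2))

/-- `s(π)`, the number of coincidence pairs. -/
def sPairs (v k : ℕ) (π : ℕ → Fin v) : ℕ := (coincPairs v k π).card

/-- `h_i(π) = ∑_{p : π(p) = i} φ(p)`. -/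
noncomputable def hrep (v k : ℕ) (π : ℕ → Fin v) (i : Fin v) : ℝ :=
  ∑ p ∈ (Icc 1 k).filter (fun p => π p = i), phi k p

/-- `T(π) = ∑_{p<q, π(p)=π(q)} φ(p)φ(q)`. -/
noncomputable def Tpi (v k : ℕ) (π : ℕ → Fin v) : ℝ :=
  ∑ pq ∈ coincPairs v k π, phi k pq.1 * phi k pq.2

theorem trend_free_parity (v k : ℕ) (hv : 0 < v) (hk : 2 ≤ k) (π : ℕ → Fin v)
    (htf : ∀ i, hrep v k π i = 0) :
    ∀ i, Even (reps v k π i * (k + 1)) := by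
  intro i
  set S := (Icc 1 k).filter (fun p => π p = i) with hS
  have hkR : (2 : ℝ) ≤ (k : ℝ) := by exact_mod_cast hk
  have hcpos : (0 : ℝ) < 3 / ((k : ℝ) * ((k : ℝ) ^ 2 - 1)) := by
    apply div_pos (by norm_num)
    have : (1 : ℝ) < (k : ℝ) ^ 2 := by nlinarith
    nlinarith
  have hsq : Real.sqrt (3 / ((k : ℝ) * ((k : ℝ) ^ 2 - 1))) ≠ 0 :=
    ne_of_gt (Real.sqrt_pos.mpr hcpos)
  have h0 : ∑ p ∈ S, (2 * (p : ℝ) - (k : ℝ) - 1) = 0 := by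
    have := htf i
    unfold hrep phi at this
    rw [← Finset.mul_sum] at this
    exact (mul_eq_zero.mp this).resolve_left hsq
  have hsum : (2 : ℝ) * ∑ p ∈ S, (p : ℝ) = (S.card : ℝ) * ((k : ℝ) + 1) := by
    have := Finset.sum_sub_distrib (s := S)
      (f := fun p => 2 * (p : ℝ) - (k : ℝ)) (g := fun _ => (1 : ℝ))
    rw [Finset.sum_sub_distrib, Finset.sum_sub_distrib, Finset.sum_const,
      Finset.sum_const, ← Finset.mul_sum] at h0
    simp at h0
    linarith
  have hnat : 2 * ∑ p ∈ S, p = S.card * (k + 1) := by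
    have : ((2 * ∑ p ∈ S, p : ℕ) : ℝ) = ((S.card * (k + 1) : ℕ) : ℝ) := by
      push_cast
      linarith
    exact_mod_cast this
  exact ⟨∑ p ∈ S, p, by rw [reps, ← hS, ← hnat]; ring⟩
end

section
/- (Property (5.7)) Let u, v, k be given and suppose π minimizes ∑_{i=1}^v n_i² among all orders π : {1,…,k} → {1,…,v} having exactly u treatments with odd replication. If two replication values j₀, j₁ each occur among n_1,…,n_v (i.e., s_{j₀} > 0 and s_{j₁} > 0), then |j₁ − j₀| ≤ 2. -/
open Finset

private lemma key_aux (v k u : ℕ) (π : ℕ → Fin v)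
    (hu : (Finset.univ.filter (fun i : Fin v => Odd (reps v k π i))).card = u)
    (hmin : ∀ π' : ℕ → Fin v,
      (Finset.univ.filter (fun i : Fin v => Odd (reps v k π' i))).card = u →
      ∑ i, (reps v k π i) ^ 2 ≤ ∑ i, (reps v k π' i) ^ 2)
    (i₀ i₁ : Fin v) (j₀ j₁ : ℕ) (h0 : reps v k π i₀ = j₀) (h1 : reps v k π i₁ = j₁) :
    j₁ ≤ j₀ + 2 := by
  by_contra hlt
  push_neg at hlt
  have hne : i₀ ≠ i₁ := by rintro rfl; rw [h0] at h1; omega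
  have hcard : 1 < ((Icc 1 k).filter (fun p => π p = i₁)).card := by
    show 1 < reps v k π i₁; omega
  obtain ⟨p, hp, q, hq, hpq⟩ := Finset.one_lt_card.mp hcard
  simp only [mem_filter] at hp hq
  set π' : ℕ → Fin v := fun r => if r = p ∨ r = q then i₀ else π r with hπ'
  have hval : ∀ r, π' r = if r = p ∨ r = q then i₀ else π r := fun r => rfl
  -- reps of π'
  have hrep_other : ∀ i : Fin v, i ≠ i₀ → i ≠ i₁ → reps v k π' i = reps v k π i := by
    intro i hi0 hi1
    unfold reps
    congr 1
    ext r
    simp only [mem_filter, hval]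
    by_cases h : r = p ∨ r = q
    · rcases h with rfl | rfl <;>
      · simp_all only [if_true, true_or, or_true]
        constructor <;> rintro ⟨hr, rfl⟩ <;> simp_all
    · simp [h]
  have hrep1 : reps v k π' i₁ = j₁ - 2 := by
    have hset : (Icc 1 k).filter (fun r => π' r = i₁)
        = ((Icc 1 k).filter (fun r => π r = i₁)) \ {p, q} := by
      ext r
      simp only [mem_sdiff, mem_filter, mem_insert, mem_singleton, hval]
      by_cases h : r = p ∨ r = q
      · simp [h, hne.symm]; tauto
      · push_neg at h; simp only [h, or_self, if_false]; tauto
    unfold reps at h1 ⊢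
    rw [hset, card_sdiff_of_subset ?_, h1]
    · congr 1
      rw [card_insert_of_notMem (by simpa using hpq), card_singleton]
    · intro r hr
      simp only [mem_insert, mem_singleton] at hr
      rcases hr with rfl | rfl <;> simp [mem_filter, hp.1, hp.2, hq.1, hq.2]
  have hrep0 : reps v k π' i₀ = j₀ + 2 := by
    have hset : (Icc 1 k).filter (fun r => π' r = i₀)
        = ((Icc 1 k).filter (fun r => π r = i₀)) ∪ {p, q} := by
      ext r
      simp only [mem_union, mem_filter, mem_insert, mem_singleton, hval]
      by_cases h : r = p ∨ r = q
      · rcases h with rfl | rfl <;> simp_all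
      · push_neg at h; simp only [h, or_self, if_false]; tauto
    have hdisj : Disjoint ((Icc 1 k).filter (fun r => π r = i₀)) ({p, q} : Finset ℕ) := by
      rw [Finset.disjoint_right]
      intro r hr
      simp only [mem_insert, mem_singleton] at hr
      rcases hr with rfl | rfl <;> simp only [mem_filter, hp.2, hq.2, not_and] <;>
        exact fun _ => hne.symm
    unfold reps at h0 ⊢
    rw [hset, card_union_of_disjoint hdisj, h0,
      card_insert_of_notMem (by simpa using hpq), card_singleton]
  -- parity preserved
  have hparu : (Finset.univ.filter (fun i : Fin v => Odd (reps v k π' i))).card = u := by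
    rw [← hu]
    congr 1
    ext i
    simp only [mem_filter, mem_univ, true_and]
    by_cases h0' : i = i₀
    · subst h0'; rw [hrep0, h0, Nat.odd_iff, Nat.odd_iff]; omega
    by_cases h1' : i = i₁
    · subst h1'; rw [hrep1, h1, Nat.odd_iff, Nat.odd_iff]; omega
    · rw [hrep_other i h0' h1']
  have hle := hmin π' hparu
  -- sum comparison
  have hsum : ∀ (f : Fin v → ℕ),
      ∑ i, f i = f i₀ + f i₁ + ∑ i ∈ (univ.erase i₀).erase i₁, f i := by
    intro f
    rw [← Finset.add_sum_erase _ f (mem_univ i₀),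
      ← Finset.add_sum_erase _ f (Finset.mem_erase.mpr ⟨hne.symm, mem_univ i₁⟩)]
    ring
  rw [hsum (fun i => reps v k π i ^ 2), hsum (fun i => reps v k π' i ^ 2)] at hle
  have hcongr : ∑ i ∈ (univ.erase i₀).erase i₁, reps v k π' i ^ 2
      = ∑ i ∈ (univ.erase i₀).erase i₁, reps v k π i ^ 2 := by
    apply Finset.sum_congr rfl
    intro i hi
    simp only [Finset.mem_erase] at hi
    rw [hrep_other i hi.2.1 hi.1]
  rw [hcongr, hrep0, hrep1, h0, h1] at hle
  obtain ⟨m, rfl⟩ : ∃ m, j₁ = j₀ + 3 + m := ⟨j₁ - (j₀ + 3), by omega⟩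
  have : j₀ + 3 + m - 2 = j₀ + 1 + m := by omega
  rw [this] at hle
  nlinarith [hle]

theorem minimizing_order_replications_close (v k u : ℕ) (hv : 0 < v) (hk : 0 < k)
    (π : ℕ → Fin v)
    (hu : (Finset.univ.filter (fun i : Fin v => Odd (reps v k π i))).card = u)
    (hmin : ∀ π' : ℕ → Fin v,
      (Finset.univ.filter (fun i : Fin v => Odd (reps v k π' i))).card = u →
      ∑ i, (reps v k π i) ^ 2 ≤ ∑ i, (reps v k π' i) ^ 2)
    (j₀ j₁ : ℕ) (h0 : ∃ i, reps v k π i = j₀) (h1 : ∃ i, reps v k π i = j₁) :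
    j₁ ≤ j₀ + 2 ∧ j₀ ≤ j₁ + 2 := by
  obtain ⟨i₀, h0⟩ := h0
  obtain ⟨i₁, h1⟩ := h1
  exact ⟨key_aux v k u π hu hmin i₀ i₁ j₀ j₁ h0 h1,
         key_aux v k u π hu hmin i₁ i₀ j₁ j₀ h1 h0⟩
end

section
/- Bound (5.5): For any order π : {1,…,k} → {1,…,v} and λ₀, λ₁ ≥ 0, F(π) = −λ₀s(π) − λ₁T(π) ≤ (1/2)·∑_{p ∈ S} (λ₁φ(p)² − λ₀), where S is the set of positions occupied by treatments appearing at least twice in π. -/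
open Finset

section Aux
variable (v k : ℕ) (π : ℕ → Fin v)

lemma reps_two {p q : ℕ} (hpA : p ∈ Icc 1 k) (hqA : q ∈ Icc 1 k) (hne : p ≠ q)
    (heq : π p = π q) : 2 ≤ reps v k π (π p) := by
  have hsub : ({p, q} : Finset ℕ) ⊆ (Icc 1 k).filter (fun r => π r = π p) := by
    intro r hr
    simp only [Finset.mem_insert, Finset.mem_singleton] at hr
    rcases hr with rfl | rfl
    · exact Finset.mem_filter.mpr ⟨hpA, rfl⟩
    · exact Finset.mem_filter.mpr ⟨hqA, heq.symm⟩
  calc 2 = ({p, q} : Finset ℕ).card := (Finset.card_pair hne).symm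
    _ ≤ _ := Finset.card_le_card hsub

lemma P2_eq :
    (Icc 1 k ×ˢ Icc 1 k).filter (fun pq => pq.1 ≠ pq.2 ∧ π pq.1 = π pq.2)
      = coincPairs v k π ∪ (coincPairs v k π).image Prod.swap := by
  ext ⟨p, q⟩
  simp only [Finset.mem_filter, Finset.mem_product, Finset.mem_union, Finset.mem_image,
    coincPairs, Prod.exists, Prod.swap_prod_mk, Prod.mk.injEq]
  constructor
  · rintro ⟨⟨hpA, hqA⟩, hne, heq⟩
    rcases lt_or_gt_of_ne hne with h | h
    · exact Or.inl ⟨⟨hpA, hqA⟩, h, heq⟩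
    · exact Or.inr ⟨q, p, ⟨⟨hqA, hpA⟩, h, heq.symm⟩, rfl, rfl⟩
  · rintro (⟨⟨hpA, hqA⟩, h, heq⟩ | ⟨a, b, ⟨⟨haA, hbA⟩, hab, heq⟩, rfl, rfl⟩)
    · exact ⟨⟨hpA, hqA⟩, ne_of_lt h, heq⟩
    · exact ⟨⟨hbA, haA⟩, (ne_of_lt hab).symm, heq.symm⟩

lemma disj_swap : Disjoint (coincPairs v k π) ((coincPairs v k π).image Prod.swap) := by
  rw [Finset.disjoint_left]
  rintro ⟨p, q⟩ hpq hpq'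
  obtain ⟨⟨a, b⟩, hab, habe⟩ := Finset.mem_image.mp hpq'
  simp only [Prod.swap_prod_mk, Prod.mk.injEq] at habe
  obtain ⟨rfl, rfl⟩ := habe
  have h1 := (Finset.mem_filter.mp hpq).2.1
  have h2 := (Finset.mem_filter.mp hab).2.1
  exact absurd h1 (not_lt.mpr (le_of_lt h2))

lemma card_P2 :
    ((Icc 1 k ×ˢ Icc 1 k).filter (fun pq => pq.1 ≠ pq.2 ∧ π pq.1 = π pq.2)).card
      = 2 * sPairs v k π := by
  rw [P2_eq, Finset.card_union_of_disjoint (disj_swap v k π),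
    Finset.card_image_of_injective _ Prod.swap_injective, sPairs]
  ring

lemma sum_P2 :
    ∑ pq ∈ (Icc 1 k ×ˢ Icc 1 k).filter (fun pq => pq.1 ≠ pq.2 ∧ π pq.1 = π pq.2),
      phi k pq.1 * phi k pq.2 = 2 * Tpi v k π := by
  rw [P2_eq, Finset.sum_union (disj_swap v k π),
    Finset.sum_image (fun a _ b _ h => Prod.swap_injective h)]
  simp only [Prod.fst_swap, Prod.snd_swap, Tpi]
  rw [show (∑ pq ∈ coincPairs v k π, phi k pq.2 * phi k pq.1)
      = ∑ pq ∈ coincPairs v k π, phi k pq.1 * phi k pq.2 from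
    Finset.sum_congr rfl fun pq _ => mul_comm _ _]
  ring

lemma card_S_le :
    ((Icc 1 k).filter (fun p => 2 ≤ reps v k π (π p))).card ≤ 2 * sPairs v k π := by
  classical
  rw [← card_P2 v k π]
  have key : ∀ p ∈ (Icc 1 k).filter (fun p => 2 ≤ reps v k π (π p)),
      ∃ q, q ∈ Icc 1 k ∧ q ≠ p ∧ π q = π p := by
    intro p hp
    obtain ⟨hpA, hrep⟩ := Finset.mem_filter.mp hp
    have h1 : 1 < ((Icc 1 k).filter (fun q => π q = π p)).card := hrep
    obtain ⟨q, hq, hqp⟩ := Finset.exists_mem_ne h1 p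
    exact ⟨q, (Finset.mem_filter.mp hq).1, hqp, (Finset.mem_filter.mp hq).2⟩
  choose g hgA hgne hgπ using key
  apply Finset.card_le_card_of_injOn (fun p => (p, if h : _ then g p h else p))
  · intro p hp
    have hp := Finset.mem_coe.mp hp
    simp only [Finset.mem_coe]
    rw [dif_pos hp]
    refine Finset.mem_filter.mpr ⟨Finset.mem_product.mpr ⟨(Finset.mem_filter.mp hp).1, hgA p hp⟩,
      (hgne p hp).symm, (hgπ p hp).symm⟩
  · intro p _ q _ hpq
    simpa using congrArg Prod.fst hpq

lemma aux_T :
    0 ≤ (∑ p ∈ (Icc 1 k).filter (fun p => 2 ≤ reps v k π (π p)), (phi k p) ^ 2)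
        + 2 * Tpi v k π := by
  classical
  set A := Icc 1 k with hA
  set Q := (A ×ˢ A).filter (fun pq => π pq.1 = π pq.2 ∧ 2 ≤ reps v k π (π pq.1)) with hQ
  have hQnn : 0 ≤ ∑ pq ∈ Q, phi k pq.1 * phi k pq.2 := by
    have hmaps : ∀ pq ∈ Q, π pq.1 ∈ (Finset.univ : Finset (Fin v)) := fun _ _ => mem_univ _
    rw [← Finset.sum_fiberwise_of_maps_to hmaps]
    apply Finset.sum_nonneg
    intro i _
    by_cases hrep : 2 ≤ reps v k π i
    · have hfib : Q.filter (fun pq => π pq.1 = i)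
          = (A.filter (fun p => π p = i)) ×ˢ (A.filter (fun p => π p = i)) := by
        ext ⟨p, q⟩
        simp only [hQ, Finset.mem_filter, Finset.mem_product]
        constructor
        · rintro ⟨⟨⟨hpA, hqA⟩, heq, _⟩, hi⟩
          exact ⟨⟨hpA, hi⟩, hqA, heq.symm.trans hi⟩
        · rintro ⟨⟨hpA, hpi⟩, hqA, hqi⟩
          exact ⟨⟨⟨hpA, hqA⟩, hpi.trans hqi.symm, by rw [hpi]; exact hrep⟩, hpi⟩
      rw [hfib, Finset.sum_product, ← Finset.sum_mul_sum]
      exact mul_self_nonneg _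
    · have hfib : Q.filter (fun pq => π pq.1 = i) = ∅ := by
        ext ⟨p, q⟩
        simp only [hQ, Finset.mem_filter, Finset.mem_product, Finset.notMem_empty, iff_false]
        rintro ⟨⟨_, _, hr⟩, hi⟩
        exact hrep (hi ▸ hr)
      rw [hfib, Finset.sum_empty]
  have hsplit : ∑ pq ∈ Q, phi k pq.1 * phi k pq.2
      = (∑ p ∈ A.filter (fun p => 2 ≤ reps v k π (π p)), (phi k p) ^ 2) + 2 * Tpi v k π := by
    rw [← Finset.sum_filter_add_sum_filter_not Q (fun pq => pq.1 = pq.2)]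
    congr 1
    · have hdiag : Q.filter (fun pq => pq.1 = pq.2)
          = (A.filter (fun p => 2 ≤ reps v k π (π p))).image (fun p => (p, p)) := by
        ext ⟨p, q⟩
        simp only [hQ, Finset.mem_filter, Finset.mem_product, Finset.mem_image, Prod.mk.injEq]
        constructor
        · rintro ⟨⟨⟨hpA, hqA⟩, heq, hr⟩, rfl⟩
          exact ⟨p, ⟨hpA, hr⟩, rfl, rfl⟩
        · rintro ⟨a, ⟨haA, har⟩, rfl, rfl⟩
          exact ⟨⟨⟨haA, haA⟩, rfl, har⟩, rfl⟩
      rw [hdiag, Finset.sum_image (fun a _ b _ h => ((Prod.mk.injEq _ _ _ _).mp h).1)]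
      exact Finset.sum_congr rfl (fun p _ => (sq (phi k p)).symm ▸ (pow_two (phi k p)).symm
        ▸ rfl)
    · have hoff : Q.filter (fun pq => ¬ pq.1 = pq.2)
          = (A ×ˢ A).filter (fun pq => pq.1 ≠ pq.2 ∧ π pq.1 = π pq.2) := by
        ext ⟨p, q⟩
        simp only [hQ, Finset.mem_filter, Finset.mem_product]
        constructor
        · rintro ⟨⟨⟨hpA, hqA⟩, heq, _⟩, hne⟩
          exact ⟨⟨hpA, hqA⟩, hne, heq⟩
        · rintro ⟨⟨hpA, hqA⟩, hne, heq⟩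
          exact ⟨⟨⟨hpA, hqA⟩, heq, reps_two v k π hpA hqA hne heq⟩, hne⟩
      rw [hoff]
      exact sum_P2 v k π
  linarith [hsplit ▸ hQnn]

end Aux

theorem F_upper_bound (v k : ℕ) (hv : 0 < v) (hk : 2 ≤ k) (l0 l1 : ℝ)
    (hl0 : 0 ≤ l0) (hl1 : 0 ≤ l1) (π : ℕ → Fin v) :
    -l0 * (sPairs v k π : ℝ) - l1 * Tpi v k π ≤
      (1 / 2) * ∑ p ∈ (Icc 1 k).filter (fun p => 2 ≤ reps v k π (π p)),
        (l1 * (phi k p) ^ 2 - l0) := by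
  have ha : (((Icc 1 k).filter (fun p => 2 ≤ reps v k π (π p))).card : ℝ)
      ≤ 2 * (sPairs v k π : ℝ) := by
    exact_mod_cast card_S_le v k π
  have hb := aux_T v k π
  have hsum : ∑ p ∈ (Icc 1 k).filter (fun p => 2 ≤ reps v k π (π p)),
      (l1 * (phi k p) ^ 2 - l0)
      = l1 * (∑ p ∈ (Icc 1 k).filter (fun p => 2 ≤ reps v k π (π p)), (phi k p) ^ 2)
        - l0 * (((Icc 1 k).filter (fun p => 2 ≤ reps v k π (π p))).card : ℝ) := by
    rw [Finset.sum_sub_distrib, ← Finset.mul_sum, Finset.sum_const, nsmul_eq_mul]; ring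
  rw [hsum]
  have h1 : 0 ≤ l1 * ((∑ p ∈ (Icc 1 k).filter (fun p => 2 ≤ reps v k π (π p)),
      (phi k p) ^ 2) + 2 * Tpi v k π) := mul_nonneg hl1 hb
  have h2 : 0 ≤ l0 * (2 * (sPairs v k π : ℝ)
      - (((Icc 1 k).filter (fun p => 2 ≤ reps v k π (π p))).card : ℝ)) :=
    mul_nonneg hl0 (by linarith)
  nlinarith [h1, h2]
end

section
/- Let k < 2v, λ₀ ∈ [0,1/k], λ₁ ∈ [0,1], and define s* = max{p integer : 1 ≤ p < (k+1)/2, λ₁φ(p)² > λ₀} (s* = 0 if λ₁φ(1)² ≤ λ₀). If k ≤ v + s*, then the order π_{s*} = (i₁,…,i_{s*}, i_{s*+1},…,i_{k−s*}, i_{s*},…,i₁) on k−s* distinct treatments attains F(π_{s*}) = ∑_{p=1}^{s*}(λ₁φ(p)² − λ₀) = max over all orders π of F(π). -/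
open Finset

/-- `F(π) = ∑_{p<q, π(p)=π(q)} (−λ₀ − λ₁φ(p)φ(q))`. -/
noncomputable def Fval (v k : ℕ) (l0 l1 : ℝ) (π : ℕ → Fin v) : ℝ :=
  ∑ pq ∈ coincPairs v k π, (-l0 - l1 * phi k pq.1 * phi k pq.2)

open Classical in
/-- `s* = max{p : 1 ≤ p < (k+1)/2, λ₁φ(p)² > λ₀}`, `0` if no such `p` exists. -/
noncomputable def sstar (k : ℕ) (l0 l1 : ℝ) : ℕ :=
  Nat.findGreatest (fun p => 2 * p < k + 1 ∧ l0 < l1 * (phi k p) ^ 2) k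



lemma phi_sq_eq (k p : ℕ) (hk : 2 ≤ k) :
    (phi k p) ^ 2 = 3 / ((k : ℝ) * ((k : ℝ) ^ 2 - 1)) * (2 * (p : ℝ) - (k : ℝ) - 1) ^ 2 := by
  have hk' : (2 : ℝ) ≤ (k : ℝ) := by exact_mod_cast hk
  have hc : (0:ℝ) ≤ 3 / ((k : ℝ) * ((k : ℝ) ^ 2 - 1)) := by
    apply div_nonneg (by norm_num)
    nlinarith
  rw [phi, mul_pow, Real.sq_sqrt hc]

lemma phi_mirror (k p : ℕ) (h1 : 1 ≤ p) (h2 : p ≤ k) : phi k (k + 1 - p) = - phi k p := by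
  have : ((k + 1 - p : ℕ) : ℝ) = (k : ℝ) + 1 - (p : ℝ) := by
    have : p ≤ k + 1 := by omega
    push_cast [Nat.cast_sub this]
    ring
  rw [phi, phi, this]
  ring

lemma phi_sq_anti (k p q : ℕ) (hk : 2 ≤ k) (h1 : 1 ≤ p) (hpq : p ≤ q) (hq : 2 * q ≤ k + 1) :
    (phi k q) ^ 2 ≤ (phi k p) ^ 2 := by
  rw [phi_sq_eq k p hk, phi_sq_eq k q hk]
  have hk' : (2 : ℝ) ≤ (k : ℝ) := by exact_mod_cast hk
  have hc : (0:ℝ) ≤ 3 / ((k : ℝ) * ((k : ℝ) ^ 2 - 1)) := by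
    apply div_nonneg (by norm_num); nlinarith
  have hq' : 2 * (q:ℝ) ≤ (k:ℝ) + 1 := by exact_mod_cast hq
  have hpq' : (p:ℝ) ≤ (q:ℝ) := by exact_mod_cast hpq
  have : (2 * (q : ℝ) - (k : ℝ) - 1) ^ 2 ≤ (2 * (p : ℝ) - (k : ℝ) - 1) ^ 2 := by nlinarith
  exact mul_le_mul_of_nonneg_left this hc

lemma pair_sum_id (C : Finset ℕ) (f : ℕ → ℝ) :
    2 * ∑ pq ∈ (C ×ˢ C).filter (fun pq => pq.1 < pq.2), f pq.1 * f pq.2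
      = (∑ p ∈ C, f p) ^ 2 - ∑ p ∈ C, (f p) ^ 2 := by
  have hprod : ∑ pq ∈ C ×ˢ C, f pq.1 * f pq.2 = (∑ p ∈ C, f p) ^ 2 := by
    rw [sq, Finset.sum_mul_sum, Finset.sum_product]
  have h1 := Finset.sum_filter_add_sum_filter_not (C ×ˢ C) (fun pq => pq.1 < pq.2)
      (fun pq => f pq.1 * f pq.2)
  have h2 := Finset.sum_filter_add_sum_filter_not
      ((C ×ˢ C).filter (fun pq => ¬ pq.1 < pq.2)) (fun pq => pq.2 < pq.1)
      (fun pq => f pq.1 * f pq.2)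
  have e1 : ((C ×ˢ C).filter (fun pq => ¬ pq.1 < pq.2)).filter (fun pq => pq.2 < pq.1)
      = (C ×ˢ C).filter (fun pq : ℕ × ℕ => pq.2 < pq.1) := by
    rw [Finset.filter_filter]
    apply Finset.filter_congr
    intro x _
    constructor
    · rintro ⟨_, h⟩; exact h
    · intro h; exact ⟨by omega, h⟩
  have e2 : ((C ×ˢ C).filter (fun pq => ¬ pq.1 < pq.2)).filter (fun pq => ¬ pq.2 < pq.1)
      = (C ×ˢ C).filter (fun pq : ℕ × ℕ => pq.1 = pq.2) := by
    rw [Finset.filter_filter]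
    apply Finset.filter_congr
    intro x _
    constructor
    · rintro ⟨h, h'⟩; omega
    · intro h; omega
  have hdiag : ∑ pq ∈ (C ×ˢ C).filter (fun pq : ℕ × ℕ => pq.1 = pq.2), f pq.1 * f pq.2
      = ∑ p ∈ C, (f p) ^ 2 := by
    apply Finset.sum_nbij' (fun pq => pq.1) (fun p => (p, p))
    · intro a ha
      simp only [Finset.mem_filter, Finset.mem_product] at ha
      exact ha.1.1
    · intro a ha
      simp only [Finset.mem_filter, Finset.mem_product]
      exact ⟨⟨ha, ha⟩, trivial⟩
    · intro a ha
      simp only [Finset.mem_filter, Finset.mem_product] at ha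
      exact Prod.ext rfl ha.2
    · intro a _; rfl
    · intro a ha
      simp only [Finset.mem_filter, Finset.mem_product] at ha
      rw [ha.2, sq]
  have hswap : ∑ pq ∈ (C ×ˢ C).filter (fun pq : ℕ × ℕ => pq.2 < pq.1), f pq.1 * f pq.2
      = ∑ pq ∈ (C ×ˢ C).filter (fun pq : ℕ × ℕ => pq.1 < pq.2), f pq.1 * f pq.2 := by
    apply Finset.sum_nbij' (fun pq => (pq.2, pq.1)) (fun pq => (pq.2, pq.1))
    · intro a ha
      simp only [Finset.mem_filter, Finset.mem_product] at ha ⊢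
      exact ⟨⟨ha.1.2, ha.1.1⟩, ha.2⟩
    · intro a ha
      simp only [Finset.mem_filter, Finset.mem_product] at ha ⊢
      exact ⟨⟨ha.1.2, ha.1.1⟩, ha.2⟩
    · intro a _; rfl
    · intro a _; rfl
    · intro a _; exact (mul_comm _ _)
  rw [e1, e2, hdiag, hswap] at h2
  rw [← h2] at h1
  rw [hprod] at h1
  linarith

lemma class_bound (C : Finset ℕ) (f : ℕ → ℝ) (l0 l1 : ℝ) (hl0 : 0 ≤ l0) (hl1 : 0 ≤ l1) :
    ∑ pq ∈ (C ×ˢ C).filter (fun pq => pq.1 < pq.2), (-l0 - l1 * f pq.1 * f pq.2)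
      ≤ (1/2) * ∑ p ∈ C, max (l1 * f p ^ 2 - l0) 0 := by
  have hH : (0:ℝ) ≤ ∑ p ∈ C, max (l1 * f p ^ 2 - l0) 0 :=
    Finset.sum_nonneg fun p _ => le_max_right _ _
  by_cases hn : C.card ≤ 1
  · have hempty : (C ×ˢ C).filter (fun pq : ℕ × ℕ => pq.1 < pq.2) = ∅ := by
      rw [Finset.filter_eq_empty_iff]
      intro pq hpq
      simp only [Finset.mem_product] at hpq
      have := Finset.card_le_one.mp hn _ hpq.1 _ hpq.2
      omega
    rw [hempty, Finset.sum_empty]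
    linarith
  · push_neg at hn
    have hn' : (2:ℝ) ≤ (C.card : ℝ) := by exact_mod_cast hn
    set P := (C ×ˢ C).filter (fun pq : ℕ × ℕ => pq.1 < pq.2) with hP
    have hsum : ∑ pq ∈ P, (-l0 - l1 * f pq.1 * f pq.2)
        = (P.card : ℝ) * (-l0) - l1 * ∑ pq ∈ P, f pq.1 * f pq.2 := by
      rw [Finset.sum_sub_distrib, Finset.sum_const, Finset.mul_sum, nsmul_eq_mul]
      congr 1
      apply Finset.sum_congr rfl
      intro x _; ring
    have hT := pair_sum_id C f
    have hN := pair_sum_id C (fun _ => (1:ℝ))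
    simp only [one_mul, Finset.sum_const, nsmul_eq_mul, mul_one, one_pow] at hN
    have hpt : l1 * ∑ p ∈ C, f p ^ 2 ≤ l0 * (C.card : ℝ) + ∑ p ∈ C, max (l1 * f p ^ 2 - l0) 0 := by
      rw [Finset.mul_sum]
      have : ∀ p ∈ C, l1 * f p ^ 2 ≤ l0 + max (l1 * f p ^ 2 - l0) 0 := by
        intro p _
        have := le_max_left (l1 * f p ^ 2 - l0) 0
        linarith
      calc ∑ p ∈ C, l1 * f p ^ 2 ≤ ∑ p ∈ C, (l0 + max (l1 * f p ^ 2 - l0) 0) :=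
            Finset.sum_le_sum this
        _ = l0 * (C.card : ℝ) + ∑ p ∈ C, max (l1 * f p ^ 2 - l0) 0 := by
            rw [Finset.sum_add_distrib, Finset.sum_const, nsmul_eq_mul]; ring
    rw [hsum]
    have hS2 : (0:ℝ) ≤ (∑ p ∈ C, f p) ^ 2 := sq_nonneg _
    nlinarith [mul_nonneg hl1 hS2, mul_nonneg hl0 (by nlinarith : (0:ℝ) ≤ (C.card:ℝ)^2 - 2*(C.card:ℝ))]

lemma sstar_props (k : ℕ) (l0 l1 : ℝ) :
    sstar k l0 l1 ≤ k ∧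
    (sstar k l0 l1 ≠ 0 →
      (2 * (sstar k l0 l1) < k + 1 ∧ l0 < l1 * (phi k (sstar k l0 l1)) ^ 2)) ∧
    ∀ n, sstar k l0 l1 < n → n ≤ k → ¬(2 * n < k + 1 ∧ l0 < l1 * (phi k n) ^ 2) := by
  unfold sstar
  have := (Nat.findGreatest_eq_iff
    (P := fun p => 2 * p < k + 1 ∧ l0 < l1 * (phi k p) ^ 2) (k := k)).mp rfl
  exact ⟨this.1, this.2.1, fun n h1 h2 => this.2.2 h1 h2⟩

lemma Fval_le_half (v k : ℕ) (l0 l1 : ℝ) (hl0 : 0 ≤ l0) (hl1 : 0 ≤ l1) (π : ℕ → Fin v) :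
    Fval v k l0 l1 π ≤ (1/2) * ∑ p ∈ Icc 1 k, max (l1 * (phi k p) ^ 2 - l0) 0 := by
  classical
  rw [Fval, ← Finset.sum_fiberwise (coincPairs v k π) (fun pq => π pq.1)
      (fun pq => (-l0 - l1 * phi k pq.1 * phi k pq.2))]
  rw [← Finset.sum_fiberwise (Icc 1 k) (fun p => π p)
      (fun p => max (l1 * (phi k p) ^ 2 - l0) 0), Finset.mul_sum]
  apply Finset.sum_le_sum
  intro i _
  have hset : (coincPairs v k π).filter (fun pq => π pq.1 = i)
      = (((Icc 1 k).filter (fun p => π p = i)) ×ˢ ((Icc 1 k).filter (fun p => π p = i))).filter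
          (fun pq => pq.1 < pq.2) := by
    ext pq
    simp only [coincPairs, Finset.mem_filter, Finset.mem_product]
    constructor
    · rintro ⟨⟨⟨h1, h2⟩, hlt, heq⟩, hi⟩
      exact ⟨⟨⟨h1, hi⟩, ⟨h2, heq ▸ hi⟩⟩, hlt⟩
    · rintro ⟨⟨⟨h1, hi1⟩, ⟨h2, hi2⟩⟩, hlt⟩
      exact ⟨⟨⟨h1, h2⟩, hlt, by rw [hi1, hi2]⟩, hi1⟩
  rw [hset]
  exact class_bound _ (phi k) l0 l1 hl0 hl1

lemma half_sum_eval (k : ℕ) (hk : 2 ≤ k) (l0 l1 : ℝ) (hl0 : 0 ≤ l0) (hl1 : 0 ≤ l1) :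
    (1/2) * ∑ p ∈ Icc 1 k, max (l1 * (phi k p) ^ 2 - l0) 0
      = ∑ p ∈ Icc 1 (sstar k l0 l1), (l1 * (phi k p) ^ 2 - l0) := by
  classical
  obtain ⟨hsk, hspec, hgreat⟩ := sstar_props k l0 l1
  set s := sstar k l0 l1 with hs
  have h2s : 2 * s ≤ k := by
    rcases Nat.eq_zero_or_pos s with h | h
    · omega
    · have := (hspec (by omega)).1; omega
  have hmid : ∀ p, s < p → p ≤ k - s → l1 * (phi k p) ^ 2 ≤ l0 := by
    intro p hp1 hp2
    by_cases hc : 2 * p < k + 1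
    · have hn := hgreat p hp1 (by omega)
      push_neg at hn
      exact hn hc
    · by_cases hc2 : 2 * p = k + 1
      · have hz : phi k p = 0 := by
          rw [phi]
          have : 2 * (p : ℝ) - (k : ℝ) - 1 = 0 := by
            have : ((2 * p : ℕ) : ℝ) = ((k + 1 : ℕ) : ℝ) := by rw [hc2]
            push_cast at this
            linarith
          rw [this, mul_zero]
        rw [hz]
        simpa using hl0
      · have hq1 : s < k + 1 - p := by omega
        have hq2 : 2 * (k + 1 - p) < k + 1 := by omega
        have hn := hgreat (k + 1 - p) hq1 (by omega)
        push_neg at hn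
        have := hn hq2
        rwa [phi_mirror k p (by omega) (by omega), neg_sq] at this
  have hlow : ∀ p, 1 ≤ p → p ≤ s → l0 ≤ l1 * (phi k p) ^ 2 := by
    intro p hp1 hp2
    have hpos : s ≠ 0 := by omega
    obtain ⟨hsb, hsl⟩ := hspec hpos
    have hanti := phi_sq_anti k p s hk hp1 hp2 (by omega)
    have := mul_le_mul_of_nonneg_left hanti hl1
    linarith
  have e1 : Icc 1 k = Ioc 0 k := by ext x; simp [Nat.lt_iff_add_one_le]
  have e2 : Icc 1 s = Ioc 0 s := by ext x; simp [Nat.lt_iff_add_one_le]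
  set h : ℕ → ℝ := fun p => max (l1 * (phi k p) ^ 2 - l0) 0 with hh
  have A := Finset.sum_Ioc_consecutive h (Nat.zero_le s) (show s ≤ k - s by omega)
  have B := Finset.sum_Ioc_consecutive h (Nat.zero_le (k - s)) (show k - s ≤ k by omega)
  have hmid0 : ∑ p ∈ Ioc s (k - s), h p = 0 := by
    apply Finset.sum_eq_zero
    intro p hp
    rw [Finset.mem_Ioc] at hp
    exact max_eq_right (by linarith [hmid p hp.1 hp.2])
  have hmirr : ∑ p ∈ Ioc (k - s) k, h p = ∑ p ∈ Ioc 0 s, h p := by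
    apply Finset.sum_nbij' (fun p => k + 1 - p) (fun p => k + 1 - p)
    · intro a ha; rw [Finset.mem_Ioc] at ha ⊢; omega
    · intro a ha; rw [Finset.mem_Ioc] at ha ⊢; omega
    · intro a ha; rw [Finset.mem_Ioc] at ha; omega
    · intro a ha; rw [Finset.mem_Ioc] at ha; omega
    · intro a ha
      rw [Finset.mem_Ioc] at ha
      simp only [hh]
      rw [phi_mirror k a (by omega) (by omega), neg_sq]
  have hlow0 : ∑ p ∈ Ioc 0 s, h p = ∑ p ∈ Ioc 0 s, (l1 * (phi k p) ^ 2 - l0) := by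
    apply Finset.sum_congr rfl
    intro p hp
    rw [Finset.mem_Ioc] at hp
    exact max_eq_left (by linarith [hlow p hp.1 hp.2])
  rw [e1, e2, ← B, ← A, hmid0, hmirr, hlow0]
  ring

theorem optimal_order_small_k (v k : ℕ) (hk : 2 ≤ k) (hkv : k < 2 * v) (l0 l1 : ℝ)
    (h0 : l0 ∈ Set.Icc 0 (1 / (k : ℝ))) (h1 : l1 ∈ Set.Icc (0 : ℝ) 1)
    (hks : k ≤ v + sstar k l0 l1) :
    ∃ π : ℕ → Fin v,
      Set.InjOn π (Set.Icc 1 (k - sstar k l0 l1)) ∧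
      (∀ p ∈ Icc 1 (sstar k l0 l1), π (k + 1 - p) = π p) ∧
      Fval v k l0 l1 π = ∑ p ∈ Icc 1 (sstar k l0 l1), (l1 * (phi k p) ^ 2 - l0) ∧
      ∀ π' : ℕ → Fin v,
        Fval v k l0 l1 π' ≤ ∑ p ∈ Icc 1 (sstar k l0 l1), (l1 * (phi k p) ^ 2 - l0) := by
  classical
  obtain ⟨hsk, hspec, hgreat⟩ := sstar_props k l0 l1
  set s := sstar k l0 l1 with hsdef
  have hl0 : 0 ≤ l0 := h0.1
  have hl1 : 0 ≤ l1 := h1.1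
  have hv : 0 < v := by omega
  have h2s : 2 * s ≤ k := by
    rcases Nat.eq_zero_or_pos s with h | h
    · omega
    · have := (hspec (by omega)).1; omega
  have hksv : k - s ≤ v := by omega
  -- the candidate order
  set idx : ℕ → ℕ := fun p => if p ≤ k - s then p - 1 else k - p with hidx
  set π : ℕ → Fin v := fun p => ⟨idx p % v, Nat.mod_lt _ hv⟩ with hπ
  have hidxlt : ∀ p, 1 ≤ p → p ≤ k → idx p < v := by
    intro p h1p h2p
    simp only [hidx]
    split <;> omega
  have hπval : ∀ p, 1 ≤ p → p ≤ k → (π p : ℕ) = idx p := by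
    intro p h1p h2p
    simp only [hπ]
    exact Nat.mod_eq_of_lt (hidxlt p h1p h2p)
  have hmirrπ : ∀ p, 1 ≤ p → p ≤ s → π (k + 1 - p) = π p := by
    intro p h1p h2p
    have e1 : idx (k + 1 - p) = p - 1 := by simp only [hidx]; split <;> omega
    have e2 : idx p = p - 1 := by simp only [hidx]; split <;> omega
    apply Fin.ext
    rw [hπval _ (by omega) (by omega), hπval _ (by omega) (by omega), e1, e2]
  refine ⟨π, ?_, ?_, ?_, ?_⟩
  · -- injectivity
    intro p hp q hq hpq
    simp only [Set.mem_Icc] at hp hq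
    have : (π p : ℕ) = (π q : ℕ) := by rw [hpq]
    rw [hπval _ hp.1 (by omega), hπval _ hq.1 (by omega)] at this
    simp only [hidx] at this
    have h1 : p ≤ k - s := hp.2
    have h2 : q ≤ k - s := hq.2
    simp only [if_pos h1, if_pos h2] at this
    omega
  · intro p hp
    rw [Finset.mem_Icc] at hp
    exact hmirrπ p hp.1 hp.2
  · -- value of Fval at π
    rw [Fval]
    apply Finset.sum_nbij' (fun pq => pq.1) (fun p => (p, k + 1 - p))
    · -- maps to
      intro a ha
      simp only [coincPairs, Finset.mem_filter, Finset.mem_product, Finset.mem_Icc] at ha ⊢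
      obtain ⟨⟨⟨ha1, ha2⟩, ha3, ha4⟩, hlt, heq⟩ := ha
      have hval : idx a.1 = idx a.2 := by
        have : (π a.1 : ℕ) = (π a.2 : ℕ) := by rw [heq]
        rwa [hπval _ ha1 ha2, hπval _ ha3 ha4] at this
      simp only [hidx] at hval
      constructor
      · exact ha1
      · -- a.1 ≤ s
        by_cases hc1 : a.1 ≤ k - s <;> by_cases hc2 : a.2 ≤ k - s <;>
          simp [hc1, hc2] at hval <;> omega
    · intro a ha
      simp only [Finset.mem_Icc] at ha
      simp only [coincPairs, Finset.mem_filter, Finset.mem_product, Finset.mem_Icc]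
      refine ⟨⟨⟨ha.1, by omega⟩, by omega, by omega⟩, by omega, ?_⟩
      exact (hmirrπ a ha.1 ha.2).symm
    · -- left inverse
      intro a ha
      simp only [coincPairs, Finset.mem_filter, Finset.mem_product, Finset.mem_Icc] at ha
      obtain ⟨⟨⟨ha1, ha2⟩, ha3, ha4⟩, hlt, heq⟩ := ha
      have hval : idx a.1 = idx a.2 := by
        have : (π a.1 : ℕ) = (π a.2 : ℕ) := by rw [heq]
        rwa [hπval _ ha1 ha2, hπval _ ha3 ha4] at this
      simp only [hidx] at hval
      have : a.2 = k + 1 - a.1 := by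
        by_cases hc1 : a.1 ≤ k - s <;> by_cases hc2 : a.2 ≤ k - s <;>
          simp [hc1, hc2] at hval <;> omega
      exact Prod.ext rfl this.symm
    · intro a _; rfl
    · -- summand equality
      intro a ha
      simp only [coincPairs, Finset.mem_filter, Finset.mem_product, Finset.mem_Icc] at ha
      obtain ⟨⟨⟨ha1, ha2⟩, ha3, ha4⟩, hlt, heq⟩ := ha
      have hval : idx a.1 = idx a.2 := by
        have : (π a.1 : ℕ) = (π a.2 : ℕ) := by rw [heq]
        rwa [hπval _ ha1 ha2, hπval _ ha3 ha4] at this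
      simp only [hidx] at hval
      have h2eq : a.2 = k + 1 - a.1 := by
        by_cases hc1 : a.1 ≤ k - s <;> by_cases hc2 : a.2 ≤ k - s <;>
          simp [hc1, hc2] at hval <;> omega
      rw [h2eq, phi_mirror k a.1 ha1 ha2]
      ring
  · -- optimality
    intro π'
    calc Fval v k l0 l1 π' ≤ (1/2) * ∑ p ∈ Icc 1 k, max (l1 * (phi k p) ^ 2 - l0) 0 :=
          Fval_le_half v k l0 l1 hl0 hl1 π'
      _ = ∑ p ∈ Icc 1 s, (l1 * (phi k p) ^ 2 - l0) := half_sum_eval k hk l0 l1 hl0 hl1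
end
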